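/- Let N ≥ 1 and σ : Fin N → ℝ. The function τ ↦ Σ_i σ_i · exp(σ_i/τ) / Σ_j exp(σ_j/τ) defined for τ > 0 is antitone (non-increasing) in τ. -/

import Mathlib

open Real Finset

lemma softmax_den_pos {N : ℕ} (hN : 0 < N) (σ : Fin N → ℝ) (β : ℝ) :
    0 < ∑ j, Real.exp (β * σ j) := by
  apply Finset.sum_pos (fun j _ => Real.exp_pos _)
  exact Finset.univ_nonempty_iff.mpr ⟨⟨0, hN⟩⟩

lemma softmax_hasDerivAt {N : ℕ} (hN : 0 < N) (σ : Fin N → ℝ) (β : ℝ) :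
    HasDerivAt
      (fun β : ℝ => (∑ i, σ i * Real.exp (β * σ i)) / (∑ j, Real.exp (β * σ j)))
      (((∑ i, σ i * (Real.exp (β * σ i) * σ i)) * (∑ j, Real.exp (β * σ j))
        - (∑ i, σ i * Real.exp (β * σ i)) * (∑ j, Real.exp (β * σ j) * σ j))
        / (∑ j, Real.exp (β * σ j)) ^ 2) β := by
  have hg : HasDerivAt (fun β : ℝ => ∑ i, σ i * Real.exp (β * σ i))
      (∑ i, σ i * (Real.exp (β * σ i) * σ i)) β := by
    apply HasDerivAt.fun_sum
    intro i _
    exact ((hasDerivAt_mul_const (σ i)).exp).const_mul (σ i)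
  have hh : HasDerivAt (fun β : ℝ => ∑ j, Real.exp (β * σ j))
      (∑ j, Real.exp (β * σ j) * σ j) β := by
    apply HasDerivAt.fun_sum
    intro j _
    exact (hasDerivAt_mul_const (σ j)).exp
  exact hg.div hh (ne_of_gt (softmax_den_pos hN σ β))

lemma softmax_mono {N : ℕ} (hN : 0 < N) (σ : Fin N → ℝ) :
    Monotone (fun β : ℝ =>
      (∑ i, σ i * Real.exp (β * σ i)) / (∑ j, Real.exp (β * σ j))) := by
  apply monotone_of_deriv_nonneg
  · exact fun β => (softmax_hasDerivAt hN σ β).differentiableAt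
  · intro β
    rw [(softmax_hasDerivAt hN σ β).deriv]
    apply div_nonneg _ (sq_nonneg _)
    rw [sub_nonneg]
    have key : (∑ i, σ i * Real.exp (β * σ i)) ^ 2 ≤
        (∑ i, σ i * (Real.exp (β * σ i) * σ i)) * (∑ j, Real.exp (β * σ j)) := by
      have := Finset.sum_mul_sq_le_sq_mul_sq Finset.univ
        (fun i => σ i * Real.sqrt (Real.exp (β * σ i)))
        (fun i => Real.sqrt (Real.exp (β * σ i)))
      have e1 : ∀ i : Fin N,
          σ i * Real.sqrt (Real.exp (β * σ i)) * Real.sqrt (Real.exp (β * σ i))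
            = σ i * Real.exp (β * σ i) := by
        intro i
        rw [mul_assoc, Real.mul_self_sqrt (Real.exp_pos _).le]
      have e2 : ∀ i : Fin N,
          (σ i * Real.sqrt (Real.exp (β * σ i))) ^ 2 = σ i * (Real.exp (β * σ i) * σ i) := by
        intro i
        rw [mul_pow, Real.sq_sqrt (Real.exp_pos _).le]; ring
      have e3 : ∀ i : Fin N, (Real.sqrt (Real.exp (β * σ i))) ^ 2 = Real.exp (β * σ i) := by
        intro i; exact Real.sq_sqrt (Real.exp_pos _).le
      simp only [e1, e2, e3] at this
      exact this
    calc (∑ i, σ i * Real.exp (β * σ i)) * (∑ j, Real.exp (β * σ j) * σ j)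
        = (∑ i, σ i * Real.exp (β * σ i)) ^ 2 := by
          rw [sq]; congr 1; exact Finset.sum_congr rfl (fun j _ => (mul_comm _ _))
      _ ≤ _ := key

theorem softmax_avg_antitone (N : ℕ) (hN : 1 ≤ N) (σ : Fin N → ℝ) :
    AntitoneOn
      (fun τ : ℝ => (∑ i, σ i * Real.exp (σ i / τ)) / (∑ j, Real.exp (σ j / τ)))
      (Set.Ioi (0 : ℝ)) := by
  intro a ha b hb hab
  simp only [Set.mem_Ioi] at ha hb
  have h1 : b⁻¹ ≤ a⁻¹ := inv_anti₀ ha hab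
  have := softmax_mono hN σ h1
  simpa only [div_eq_inv_mul, mul_comm] using this
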